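/- Let V and E be finite types with maps s, r : E → V, and let X = {x : ℕ → E | for all n, s(x(n+1)) = r(x(n))} be the path space, a subspace of E^ℕ with E discrete. Assume the graph is primitive: there exists N ≥ 1 such that any two vertices are joined by a path of length exactly N. Let C ⊆ E, and for each e ∈ C let h₀^e, h^e : E → Bool, with μ^e defined recursively by μ^e(0)(x) = h₀^e(x(0)) and μ^e(n+1)(x) = μ^e(n)(x) if x(n+1) = e, μ^e(n+1)(x) = h^e(x(n+1)) otherwise. Assume moreover that every e ∈ C satisfies s(e) = r(e), and that for every e ∈ C and every b ∈ Bool there exists f ∈ E with f ≠ e, r(f) = r(e), and h^e(f) = b. Define 𝒳' = {(x,y) ∈ X × X : there exists n with x(m) = y(m) for all m > n and μ^e(n)(x) = μ^e(n)(y) for all e ∈ C}. Then for every x ∈ X, the 𝒳'-equivalence class {y ∈ X : (x,y) ∈ 𝒳'} is dense in X. -/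

import Mathlib

/-- The functions `μ^e_n` of Section 4, abstract form. -/
def mu {E : Type*} [DecidableEq E] (e : E) (h₀ h : E → Bool) :
    ℕ → (ℕ → E) → Bool
  | 0, x => h₀ (x 0)
  | n + 1, x => if x (n + 1) = e then mu e h₀ h n x else h (x (n + 1))

/-- The path space of the directed graph `(V, E, r, s)`, as a subspace of the
product space `E^ℕ`. -/
def PathSpace {V E : Type*} (s r : E → V) : Type _ :=
  {x : ℕ → E // ∀ n : ℕ, s (x (n + 1)) = r (x n)}

instance {V E : Type*} [TopologicalSpace E] (s r : E → V) :
    TopologicalSpace (PathSpace s r) :=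
  instTopologicalSpaceSubtype

lemma mu_succ {E : Type*} [DecidableEq E] (e : E) (h₀ h : E → Bool) (n : ℕ) (x : ℕ → E) :
    mu e h₀ h (n + 1) x = if x (n + 1) = e then mu e h₀ h n x else h (x (n + 1)) := rfl

/-- Glue together `z` on `[0,k]`, a connecting path `p` on `[k+1, k+N]`, an
edge `f` at `k+N+1`, and `x` beyond. -/
def stmtGlue {E : Type*} (z x p : ℕ → E) (f : E) (k N : ℕ) : ℕ → E := fun i =>
  if i ≤ k then z i else if i ≤ k + N then p (i - (k + 1)) else
    if i = k + N + 1 then f else x i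

lemma stmtGlue_le {E : Type*} (z x p : ℕ → E) (f : E) (k N : ℕ) {i : ℕ} (h : i ≤ k) :
    stmtGlue z x p f k N i = z i := if_pos h

lemma stmtGlue_mid {E : Type*} (z x p : ℕ → E) (f : E) (k N : ℕ) (j : ℕ) (hj : j < N) :
    stmtGlue z x p f k N (k + 1 + j) = p j := by
  unfold stmtGlue
  rw [if_neg (by omega), if_pos (by omega)]
  congr 1
  omega

lemma stmtGlue_f {E : Type*} (z x p : ℕ → E) (f : E) (k N : ℕ) :
    stmtGlue z x p f k N (k + N + 1) = f := by
  unfold stmtGlue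
  rw [if_neg (by omega), if_neg (by omega), if_pos rfl]

lemma stmtGlue_gt {E : Type*} (z x p : ℕ → E) (f : E) (k N : ℕ) {i : ℕ}
    (h : k + N + 1 < i) : stmtGlue z x p f k N i = x i := by
  unfold stmtGlue
  rw [if_neg (by omega), if_neg (by omega), if_neg (by omega)]

/-- Lemma 4.3, abstract form: the AF subequivalence relation
`𝒳' = ⋃ₙ 𝒳'_n` on the path space of a primitive graph is minimal, i.e. every
`𝒳'`-equivalence class is dense. -/
theorem stmt10 {V E : Type*} [Fintype V] [Fintype E] [DecidableEq E]
    [TopologicalSpace E] [DiscreteTopology E]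
    (s r : E → V) (N : ℕ) (hN : 1 ≤ N)
    (hprim : ∀ p q : V, ∃ e : ℕ → E, s (e 0) = p ∧ r (e (N - 1)) = q ∧
      ∀ i : ℕ, i + 1 < N → s (e (i + 1)) = r (e i))
    (C : Set E) (h₀ h : E → E → Bool)
    (hloop : ∀ e ∈ C, s e = r e)
    (hreal : ∀ e ∈ C, ∀ b : Bool, ∃ f : E, f ≠ e ∧ r f = r e ∧ h e f = b) :
    ∀ x : PathSpace s r,
      Dense {y : PathSpace s r | ∃ n : ℕ, (∀ m > n, x.val m = y.val m) ∧
        ∀ e ∈ C, mu e (h₀ e) (h e) n x.val = mu e (h₀ e) (h e) n y.val} := by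
  intro x
  intro z
  -- For each `k`, construct an element of the class agreeing with `z` on `[0,k]`.
  have key : ∀ k : ℕ, ∃ y : PathSpace s r, (∀ i : ℕ, i ≤ k → y.val i = z.val i) ∧
      (∃ n : ℕ, (∀ m > n, x.val m = y.val m) ∧
        ∀ e ∈ C, mu e (h₀ e) (h e) n x.val = mu e (h₀ e) (h e) n y.val) := by
    intro k
    -- choose the edge `f` at position `k+N+1`
    obtain ⟨f, hfr, hfC⟩ : ∃ f : E, r f = s (x.val (k + N + 2)) ∧
        (x.val (k + N + 2) ∈ C → f ≠ x.val (k + N + 2) ∧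
          h (x.val (k + N + 2)) f
            = mu (x.val (k + N + 2)) (h₀ (x.val (k + N + 2))) (h (x.val (k + N + 2)))
                (k + N + 1) x.val) := by
      by_cases hc : x.val (k + N + 2) ∈ C
      · obtain ⟨f, h1, h2, h3⟩ := hreal _ hc
          (mu (x.val (k + N + 2)) (h₀ (x.val (k + N + 2))) (h (x.val (k + N + 2)))
            (k + N + 1) x.val)
        exact ⟨f, by rw [h2, ← hloop _ hc], fun _ => ⟨h1, h3⟩⟩
      · exact ⟨x.val (k + N + 1), (x.2 (k + N + 1)).symm, fun hx => absurd hx hc⟩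
    -- choose the connecting path
    obtain ⟨p, hp0, hpN, hpi⟩ := hprim (r (z.val k)) (s f)
    set y : ℕ → E := stmtGlue z.val x.val p f k N with hy
    have hygt : ∀ m : ℕ, k + N + 1 < m → y m = x.val m := fun m hm =>
      stmtGlue_gt _ _ _ _ _ _ hm
    have hpath : ∀ m : ℕ, s (y (m + 1)) = r (y m) := by
      intro m
      by_cases h1 : m + 1 ≤ k
      · rw [hy, stmtGlue_le _ _ _ _ _ _ h1, stmtGlue_le _ _ _ _ _ _ (by omega)]
        exact z.2 m
      by_cases h2 : m = k
      · have e1 : y (m + 1) = p 0 := by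
          rw [h2]
          simpa using stmtGlue_mid z.val x.val p f k N 0 (by omega)
        rw [e1, hy, h2, stmtGlue_le _ _ _ _ _ _ (le_refl k)]
        exact hp0
      by_cases h3 : m + 1 ≤ k + N
      · obtain ⟨j, rfl⟩ : ∃ j, m = k + 1 + j := ⟨m - (k + 1), by omega⟩
        have e1 : y (k + 1 + j + 1) = p (j + 1) := by
          have := stmtGlue_mid z.val x.val p f k N (j + 1) (by omega)
          rw [hy, show k + 1 + j + 1 = k + 1 + (j + 1) by omega]
          exact this
        have e2 : y (k + 1 + j) = p j := stmtGlue_mid z.val x.val p f k N j (by omega)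
        rw [e1, e2]
        exact hpi j (by omega)
      by_cases h4 : m = k + N
      · subst h4
        have e1 : y (k + N + 1) = f := stmtGlue_f _ _ _ _ _ _
        have e2 : y (k + N) = p (N - 1) := by
          rw [hy, show k + N = k + 1 + (N - 1) by omega]
          exact stmtGlue_mid z.val x.val p f k N (N - 1) (by omega)
        rw [e1, e2]
        exact hpN.symm
      by_cases h5 : m = k + N + 1
      · subst h5
        have e1 : y (k + N + 1 + 1) = x.val (k + N + 2) := hygt _ (by omega)
        have e2 : y (k + N + 1) = f := stmtGlue_f _ _ _ _ _ _
        rw [e1, e2]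
        exact hfr.symm
      · rw [hygt (m + 1) (by omega), hygt m (by omega)]
        exact x.2 m
    refine ⟨⟨y, hpath⟩, fun i hi => stmtGlue_le _ _ _ _ _ _ hi, k + N + 2, ?_, ?_⟩
    · intro m hm
      exact (hygt m (by omega)).symm
    · intro e he
      have hy2 : y (k + N + 2) = x.val (k + N + 2) := hygt _ (by omega)
      by_cases heq : x.val (k + N + 2) = e
      · -- the repeating-loop case: use the specially chosen `f`
        have hc : x.val (k + N + 2) ∈ C := heq ▸ he
        obtain ⟨hfne, hfb⟩ := hfC hc
        have L : mu e (h₀ e) (h e) (k + N + 2) x.val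
            = mu e (h₀ e) (h e) (k + N + 1) x.val := by
          rw [show k + N + 2 = (k + N + 1) + 1 by omega, mu_succ, if_pos]
          exact heq
        have R : mu e (h₀ e) (h e) (k + N + 2) y = h e f := by
          rw [show k + N + 2 = (k + N + 1) + 1 by omega, mu_succ,
            if_pos (show y ((k + N + 1) + 1) = e from hy2.trans heq)]
          rw [show k + N + 1 = (k + N) + 1 by omega, mu_succ]
          have hf1 : y ((k + N) + 1) = f := stmtGlue_f _ _ _ _ _ _
          rw [if_neg (by rw [hf1]; exact fun hfe => hfne (hfe.trans heq.symm)), hf1]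
        rw [L, R]
        rw [← heq] at *
        exact hfb.symm
      · have L : mu e (h₀ e) (h e) (k + N + 2) x.val = h e (x.val (k + N + 2)) := by
          rw [show k + N + 2 = (k + N + 1) + 1 by omega, mu_succ, if_neg]
          exact heq
        have R : mu e (h₀ e) (h e) (k + N + 2) y = h e (y (k + N + 2)) := by
          rw [show k + N + 2 = (k + N + 1) + 1 by omega, mu_succ, if_neg]
          exact fun hye => heq (hy2 ▸ hye)
        rw [L, R, hy2]
  choose yseq hagree hmem using key
  refine mem_closure_of_tendsto (f := yseq) (b := Filter.atTop) ?_ ?_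
  · refine tendsto_subtype_rng.2 ?_
    rw [tendsto_pi_nhds]
    intro i
    refine (tendsto_const_nhds : Filter.Tendsto (fun _ : ℕ => z.val i)
      Filter.atTop (nhds (z.val i))).congr' ?_
    exact Filter.eventually_atTop.2 ⟨i, fun k hk => (hagree k i hk).symm⟩
  · exact Filter.Eventually.of_forall hmem
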